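/- Let f : ℝ → ℝ be periodic with period 1, integrable on [0,1], and satisfy ∫₀¹ f(t) dt = 0. Then the function F(x) = ∫₀ˣ f(t) dt has every chord; that is, for every t ∈ ℝ there exists x ∈ ℝ such that F(x + t) = F(x). -/
import Mathlib

open MeasureTheory intervalIntegral

/-- A 1-periodic function integrable on `[0,1]` is integrable on every interval. -/
lemma periodic_intervalIntegrable_all
    (f : ℝ → ℝ) (hfp : Function.Periodic f 1)
    (hf : IntervalIntegrable f MeasureTheory.volume 0 1) :
    ∀ a b : ℝ, IntervalIntegrable f MeasureTheory.volume a b := by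
  -- integrable on [k, k+1] for every integer k
  have hk : ∀ k : ℤ, IntervalIntegrable f MeasureTheory.volume k (k + 1) := by
    intro k
    have h := hf.comp_add_right (-(k : ℝ))
    have heq : (fun x : ℝ => f (x + -(k : ℝ))) = f := by
      funext x
      have := hfp.sub_int_mul_eq (x := x) k
      simpa [sub_eq_add_neg] using this
    rw [heq] at h
    simpa [add_comm] using h
  -- integrable on [k, k+n]
  have hkn : ∀ n : ℕ, ∀ k : ℤ, IntervalIntegrable f MeasureTheory.volume k (k + n) := by
    intro n
    induction n with
    | zero => intro k; simp
    | succ m ih =>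
      intro k
      have h1 := ih k
      have h2 := hk (k + m)
      have h2' : IntervalIntegrable f MeasureTheory.volume ((k : ℝ) + m) (k + ((m:ℕ) + 1 : ℕ)) := by
        push_cast
        rw [← add_assoc]
        exact_mod_cast h2
      exact (h1.trans h2')
  intro a b
  -- find integers m ≤ min a b and M ≥ max a b
  set m : ℤ := ⌊min a b⌋ with hm
  set N : ℕ := (⌈max a b⌉ - m).toNat with hN
  have hmle : (m : ℝ) ≤ min a b := Int.floor_le _
  have hMge : max a b ≤ (m : ℝ) + N := by
    have h1 : max a b ≤ (⌈max a b⌉ : ℝ) := Int.le_ceil _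
    have h2 : m ≤ ⌈max a b⌉ := by
      have hmr : (m : ℝ) ≤ max a b := hmle.trans (min_le_max)
      have hcr : (m : ℝ) ≤ ((⌈max a b⌉ : ℤ) : ℝ) := hmr.trans (Int.le_ceil _)
      exact_mod_cast hcr
    have h3 : ((⌈max a b⌉ : ℤ) : ℝ) ≤ (m : ℝ) + N := by
      have : (N : ℤ) = ⌈max a b⌉ - m := Int.toNat_of_nonneg (by omega)
      have : ((N : ℤ) : ℝ) = ((⌈max a b⌉ - m : ℤ) : ℝ) := by exact_mod_cast this
      push_cast at this
      linarith
    linarith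
  have hbig := hkn N m
  refine hbig.mono_set ?_
  rw [Set.uIcc_subset_uIcc_iff_le]
  constructor
  · calc min (m : ℝ) ((m : ℝ) + N) ≤ (m : ℝ) := min_le_left _ _
      _ ≤ min a b := hmle
  · calc max a b ≤ (m : ℝ) + N := hMge
      _ ≤ max (m : ℝ) ((m : ℝ) + N) := le_max_right _ _

/-- If `f : ℝ → ℝ` is `1`-periodic, integrable on `[0,1]`, and `∫₀¹ f = 0`,
then `F x = ∫₀ˣ f` has every chord: for each `t ∈ ℝ` there is `x ∈ ℝ` with
`F (x + t) = F x`. -/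
theorem primitive_of_periodic_has_every_chord
    (f : ℝ → ℝ)
    (hfp : Function.Periodic f 1)
    (hf : IntervalIntegrable f MeasureTheory.volume 0 1)
    (hf0 : (∫ t in (0:ℝ)..1, f t) = 0)
    (t : ℝ) :
    ∃ x : ℝ, (∫ s in (0:ℝ)..(x + t), f s) = ∫ s in (0:ℝ)..x, f s := by
  have hInt := periodic_intervalIntegrable_all f hfp hf
  set F : ℝ → ℝ := fun x => ∫ s in (0:ℝ)..x, f s with hF
  have hFc : Continuous F := intervalIntegral.continuous_primitive hInt 0
  -- F is 1-periodic
  have hFp : Function.Periodic F 1 := by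
    intro x
    have hsplit : (∫ s in (0:ℝ)..x, f s) + (∫ s in x..(x+1), f s)
        = ∫ s in (0:ℝ)..(x+1), f s :=
      intervalIntegral.integral_add_adjacent_intervals (hInt 0 x) (hInt x (x+1))
    have hshift : (∫ s in x..(x+1), f s) = ∫ s in (0:ℝ)..(0+1), f s :=
      hfp.intervalIntegral_add_eq x 0
    simp only [zero_add] at hshift
    simp only [hF]
    rw [← hsplit, hshift, hf0, add_zero]
  -- max and min of F on [0,1]
  obtain ⟨a, ha01, hamax⟩ := (isCompact_Icc (a := (0:ℝ)) (b := 1)).exists_isMaxOn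
    ⟨0, by norm_num⟩ hFc.continuousOn
  obtain ⟨b, hb01, hbmin⟩ := (isCompact_Icc (a := (0:ℝ)) (b := 1)).exists_isMinOn
    ⟨0, by norm_num⟩ hFc.continuousOn
  -- F y = F (Int.fract y), and fract y ∈ [0,1]
  have hfract : ∀ y : ℝ, F y = F (Int.fract y) := by
    intro y
    have := hFp.sub_int_mul_eq (x := y) ⌊y⌋
    simp only [mul_one] at this
    rw [Int.fract]
    exact this.symm
  have hglobmax : ∀ y : ℝ, F y ≤ F a := by
    intro y
    rw [hfract y]
    exact hamax ⟨Int.fract_nonneg y, (Int.fract_lt_one y).le⟩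
  have hglobmin : ∀ y : ℝ, F b ≤ F y := by
    intro y
    rw [hfract y]
    exact hbmin ⟨Int.fract_nonneg y, (Int.fract_lt_one y).le⟩
  -- chord function
  set G : ℝ → ℝ := fun x => F (x + t) - F x with hG
  have hGc : Continuous G := (hFc.comp (continuous_id.add continuous_const)).sub hFc
  have hGa : G a ≤ 0 := sub_nonpos.mpr (hglobmax (a + t))
  have hGb : 0 ≤ G b := sub_nonneg.mpr (hglobmin (b + t))
  have h0 : (0:ℝ) ∈ Set.uIcc (G a) (G b) := Set.mem_uIcc.mpr (Or.inl ⟨hGa, hGb⟩)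
  have := intermediate_value_uIcc (f := G) (a := a) (b := b) hGc.continuousOn
  obtain ⟨x, _, hx⟩ := this h0
  exact ⟨x, sub_eq_zero.mp hx⟩
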